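/- arXiv:1710.10476 — 2 statements merged into one kernel-verified Lean document; each statement's English description precedes it below -/
import Mathlib

section
/- Let K be a nearly locally λ-presentable category and C a small category. Then the functor category K^C is nearly locally λ-presentable. -/
universe w v u u₁ u₂

open CategoryTheory CategoryTheory.Limits Opposite

namespace NLP

variable {C : Type u} [Category.{v} C]

/-- The poset of subsets of `I` of cardinality `< κ`, ordered by inclusion. -/
abbrev SmallSub (κ : Cardinal.{w}) (I : Type w) : Type w :=
  {J : Set I // Cardinal.mk J < κ}

section
variable [HasCoproducts.{w} C]

/-- The diagram of subcoproducts `∐_{j ∈ J} K_j`, for `J ⊆ I` with `|J| < κ`,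
with subcoproduct injections as connecting morphisms. -/
noncomputable def subDiag (κ : Cardinal.{w}) {I : Type w} (K : I → C) :
    SmallSub κ I ⥤ C where
  obj J := ∐ (fun j : J.1 => K j)
  map {J J'} f :=
    Sigma.desc (fun j => Sigma.ι (fun j' : J'.1 => K j') ⟨j.1, leOfHom f j.2⟩)
  map_id J := by
    ext j
    simp
  map_comp {J J' J''} f g := by
    ext j
    simp

/-- The cocone on the subcoproduct diagram with vertex the full coproduct `∐ K`;
this is the "special κ-directed colimit" expressing `∐ K` as the κ-directed colimit
of its subcoproducts of size `< κ`. -/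
noncomputable def subCocone (κ : Cardinal.{w}) {I : Type w} (K : I → C) :
    Cocone (subDiag (C := C) κ K) where
  pt := ∐ K
  ι :=
    { app := fun J => Sigma.desc (fun j => Sigma.ι K j.1)
      naturality := by
        intro J J' f
        dsimp only [subDiag]
        ext j
        simp }

/-- The subcoproduct injection `∐_{j ∈ J} K_j ⟶ ∐_{i ∈ I} K_i`. -/
noncomputable def subInj (κ : Cardinal.{w}) {I : Type w} (K : I → C) (J : SmallSub κ I) :
    (∐ fun j : J.1 => K j) ⟶ ∐ K :=
  Sigma.desc (fun j => Sigma.ι K j.1)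

/-- An object `A` is nearly `κ`-presentable if its hom-functor `K(A,-)` preserves
special `κ`-directed colimits. -/
def NearlyPresentable (κ : Cardinal.{w}) (A : C) : Prop :=
  ∀ {I : Type w} (K : I → C),
    Nonempty (IsColimit ((coyoneda.obj (op A)).mapCocone (subCocone κ K)))

/-- `C` has monomorphisms stable under special `κ`-directed colimits. -/
def MonosStableUnderSpecial (κ : Cardinal.{w}) : Prop :=
  ∀ {I : Type w} (K : I → C) {X : C} (f : (∐ K) ⟶ X),
    (∀ J : SmallSub κ I, Mono (subInj (C := C) κ K J ≫ f)) → Mono f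

end

/-- A preordered set is `κ`-directed if every subset of cardinality `< κ` has
an upper bound. -/
def IsCardinalDirected (κ : Cardinal.{w}) (J : Type w) [Preorder J] : Prop :=
  ∀ S : Set J, Cardinal.mk S < κ → ∃ j : J, ∀ s ∈ S, s ≤ j

/-- An object `A` is `κ`-presentable if its hom-functor preserves `κ`-directed colimits. -/
def PresentableObj (κ : Cardinal.{v}) (A : C) : Prop :=
  ∀ (J : Type v) [PartialOrder J], IsCardinalDirected κ J →
    Nonempty (PreservesColimitsOfShape J (coyoneda.obj (op A)))

/-- The restricted Yoneda functor `E_S : C ⥤ Set^{S^op}` for a full subcategory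
on a set `S` of objects. -/
def restrictedYoneda (S : Set C) : C ⥤ ((ObjectProperty.FullSubcategory (· ∈ S))ᵒᵖ ⥤ Type v) :=
  yoneda ⋙ (Functor.whiskeringLeft (ObjectProperty.FullSubcategory (· ∈ S))ᵒᵖ Cᵒᵖ (Type v)).obj
    (ObjectProperty.ι (· ∈ S)).op

/-- A set `S` of objects is a strong generator if it is small and the restricted
Yoneda functor `E_S : C ⥤ Set^{S^op}` is faithful and conservative. -/
structure IsStrongGenerator (S : Set C) : Prop where
  small : Small.{v} S
  faithful : (restrictedYoneda S).Faithful
  reflectsIsos : (restrictedYoneda S).ReflectsIsomorphisms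

/-- A set `S` of objects is dense if the restricted Yoneda functor
`E_S : C ⥤ Set^{S^op}` is fully faithful. -/
def IsDenseSub (S : Set C) : Prop :=
  (restrictedYoneda S).Full ∧ (restrictedYoneda S).Faithful

/-- A category is weakly co-wellpowered if every object has only a set of strong
quotients. -/
def WeaklyCoWellPowered (C : Type u) [Category.{v} C] : Prop :=
  ∀ X : C, ∃ (ι : Type v) (Z : ι → C) (p : ∀ i, X ⟶ Z i),
    (∀ i, StrongEpi (p i)) ∧
    ∀ (Y : C) (f : X ⟶ Y), StrongEpi f → ∃ (i : ι) (e : Z i ≅ Y), p i ≫ e.hom = f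

/-- A cocomplete category is nearly locally `κ`-presentable if it is weakly
co-wellpowered and has a strong generator consisting of nearly `κ`-presentable
objects. -/
structure IsNearlyLocallyPresentable (κ : Cardinal.{v}) (C : Type u) [Category.{v} C] : Prop where
  isRegular : κ.IsRegular
  cocomplete : HasColimitsOfSize.{v, v} C
  wcwp : WeaklyCoWellPowered C
  exists_gen : ∃ S : Set C, IsStrongGenerator S ∧
    ∀ A ∈ S, haveI := cocomplete; NearlyPresentable κ A

/-- A category is locally `κ`-presentable if it is cocomplete and has a strong
generator consisting of `κ`-presentable objects. -/
structure IsLocallyPresentable (κ : Cardinal.{v}) (C : Type u) [Category.{v} C] : Prop where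
  isRegular : κ.IsRegular
  cocomplete : HasColimitsOfSize.{v, v} C
  exists_gen : ∃ S : Set C, IsStrongGenerator S ∧ ∀ A ∈ S, PresentableObj κ A

/-- A category has regular factorizations if every morphism factors as a regular
epimorphism followed by a monomorphism. -/
def HasRegularFactorizations (C : Type u) [Category.{v} C] : Prop :=
  ∀ ⦃X Y : C⦄ (f : X ⟶ Y), ∃ (Z : C) (e : X ⟶ Z) (m : Z ⟶ Y),
    Nonempty (RegularEpi e) ∧ Mono m ∧ e ≫ m = f

/-- A category has (strong epi, mono)-factorizations if every morphism factors as
a strong epimorphism followed by a monomorphism. -/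
def HasStrongEpiMonoFacts (C : Type u) [Category.{v} C] : Prop :=
  ∀ ⦃X Y : C⦄ (f : X ⟶ Y), ∃ (Z : C) (e : X ⟶ Z) (m : Z ⟶ Y),
    StrongEpi e ∧ Mono m ∧ e ≫ m = f

/-- A class of objects `T` is closed under colimits if the vertex of any colimit
cocone on a small diagram with values in `T` belongs to `T`. -/
def ClosedUnderColimits (T : Set C) : Prop :=
  ∀ {J : Type v} [SmallCategory J] (F : J ⥤ C), (∀ j, F.obj j ∈ T) →
    ∀ (c : Cocone F), IsColimit c → c.pt ∈ T


section Aux15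

theorem semf {C : Type u} [Category.{v} C] [HasColimitsOfSize.{v, v} C]
    (wcwp : WeaklyCoWellPowered C) : HasStrongEpiMonoFacts C := by
  intro X Y f
  obtain ⟨ι, Z, p, hst, hcov⟩ := wcwp X
  haveI := fun i => hst i
  -- the set of indices through which f factors
  set D := {i : ι // ∃ g : Z i ⟶ Y, p i ≫ g = f} with hD
  haveI : HasWidePushout X (fun d : D => Z d.1) (fun d => p d.1) := by
    have : HasColimitsOfShape (WidePushoutShape D) C := inferInstance
    infer_instance
  set P := widePushout X (fun d : D => Z d.1) (fun d => p d.1) with hP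
  set e : X ⟶ P := WidePushout.head _ with he
  set m : P ⟶ Y := WidePushout.desc f (fun d => d.2.choose) (fun d => d.2.choose_spec) with hm
  have hem : e ≫ m = f := by simp [he, hm, WidePushout.head_desc]
  have key : ∀ d : D, p d.1 ≫ WidePushout.ι (fun d : D => p d.1) d = e :=
    fun d => WidePushout.arrow_ι (fun d : D => p d.1) d
  -- D is nonempty
  obtain ⟨i₀, e₀, hi₀⟩ := hcov X (𝟙 X) inferInstance
  have hd₀ : ∃ g : Z i₀ ⟶ Y, p i₀ ≫ g = f := ⟨e₀.hom ≫ f, by rw [← Category.assoc, hi₀]; simp⟩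
  let d₀ : D := ⟨i₀, hd₀⟩
  -- e is an epi
  have hepi : Epi e := by
    constructor
    intro T u v huv
    apply WidePushout.hom_ext
    · intro d
      have : p d.1 ≫ WidePushout.ι (fun d : D => p d.1) d ≫ u
           = p d.1 ≫ WidePushout.ι (fun d : D => p d.1) d ≫ v := by
        rw [← Category.assoc, ← Category.assoc, key]; exact huv
      exact (cancel_epi (p d.1)).1 this
    · exact huv
  -- e is a strong epi
  have hse : StrongEpi e := by
    refine StrongEpi.mk hepi ?_
    intro A B z hz
    constructor
    intro u v sq
    have lifts : ∀ d : D, { l : Z d.1 ⟶ A // p d.1 ≫ l = u ∧ l ≫ z = WidePushout.ι (fun d : D => p d.1) d ≫ v } := by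
      intro d
      have sq' : CommSq u (p d.1) z (WidePushout.ι (fun d : D => p d.1) d ≫ v) := by
        constructor
        rw [← Category.assoc, key]
        exact sq.w
      exact ⟨sq'.lift, sq'.fac_left, sq'.fac_right⟩
    refine ⟨⟨⟨WidePushout.desc u (fun d => (lifts d).1) (fun d => (lifts d).2.1), ?_, ?_⟩⟩⟩
    · simp [he, WidePushout.head_desc]
    · apply WidePushout.hom_ext
      · intro d
        rw [← Category.assoc, WidePushout.ι_desc, (lifts d).2.2]
      · rw [← Category.assoc]
        show (e ≫ _) ≫ z = e ≫ v
        rw [WidePushout.head_desc, sq.w]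
  -- m is a mono
  have hmono : Mono m := by
    constructor
    intro T u v huv
    set q : P ⟶ coequalizer u v := coequalizer.π u v with hq
    haveI : StrongEpi q := inferInstance
    haveI : StrongEpi (e ≫ q) := strongEpi_comp e q
    obtain ⟨i₁, e₁, hi₁⟩ := hcov _ (e ≫ q) inferInstance
    have hm' : ∃ m' : coequalizer u v ⟶ Y, q ≫ m' = m := ⟨coequalizer.desc m huv, by simp [hq]⟩
    have hd₁ : ∃ g : Z i₁ ⟶ Y, p i₁ ≫ g = f := by
      obtain ⟨m', hm'⟩ := hm'
      exact ⟨e₁.hom ≫ m', by rw [← Category.assoc, hi₁, Category.assoc, hm', hem]⟩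
    let d₁ : D := ⟨i₁, hd₁⟩
    have hsplit : q ≫ (e₁.inv ≫ WidePushout.ι (fun d : D => p d.1) d₁) = 𝟙 P := by
      apply (cancel_epi e).1
      rw [← Category.assoc, ← Category.assoc, ← hi₁]
      simp only [Category.assoc, Iso.hom_inv_id_assoc, Category.comp_id]
      exact key d₁
    haveI : IsSplitMono q := IsSplitMono.mk' ⟨_, hsplit⟩
    haveI : Epi q := inferInstance
    haveI : IsIso q := isIso_of_epi_of_isSplitMono q
    have := coequalizer.condition u v
    rw [← hq] at this
    exact (cancel_mono q).1 this
  exact ⟨P, e, m, hse, hmono, hem⟩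


theorem strongEpi_app {K : Type u} [Category.{v} K] {𝒞 : Type u₁} [Category.{v} 𝒞]
    (facts : HasStrongEpiMonoFacts K) {X Y : 𝒞 ⥤ K} (f : X ⟶ Y) [StrongEpi f] (c : 𝒞) :
    StrongEpi (f.app c) := by
  choose Z e m hse hm hcomp using fun c => facts (f.app c)
  haveI := hse
  haveI := hm
  have sq : ∀ {c c' : 𝒞} (φ : c ⟶ c'),
      CommSq (X.map φ ≫ e c') (e c) (m c') (m c ≫ Y.map φ) := by
    intro c c' φ
    constructor
    simp only [Category.assoc]
    rw [hcomp c', ← Category.assoc (e c), hcomp c]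
    exact f.naturality φ
  let Im : 𝒞 ⥤ K :=
    { obj := Z
      map := fun {c c'} φ => (sq φ).lift
      map_id := fun c => by
        apply (cancel_epi (e c)).1
        rw [(sq (𝟙 c)).fac_left]
        simp
      map_comp := fun {c c' c''} φ ψ => by
        apply (cancel_epi (e c)).1
        rw [(sq (φ ≫ ψ)).fac_left, ← Category.assoc, (sq φ).fac_left, Category.assoc,
          (sq ψ).fac_left, X.map_comp]
        simp }
  let eNat : X ⟶ Im :=
    { app := e
      naturality := fun c c' φ => ((sq φ).fac_left).symm }
  let mNat : Im ⟶ Y :=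
    { app := m
      naturality := fun c c' φ => (sq φ).fac_right }
  haveI : Mono mNat := NatTrans.mono_of_mono_app mNat
  have sq2 : CommSq eNat f mNat (𝟙 Y) := by
    constructor
    ext c
    simp [eNat, mNat, hcomp c]
  haveI : IsSplitEpi mNat := IsSplitEpi.mk' ⟨sq2.lift, sq2.fac_right⟩
  haveI : IsIso mNat := isIso_of_mono_of_isSplitEpi mNat
  haveI : IsIso (mNat.app c) := NatIso.isIso_app_of_isIso mNat c
  have : f.app c = e c ≫ m c := (hcomp c).symm
  rw [this]
  have : StrongEpi (m c) := strongEpi_of_isIso (m c)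
  exact strongEpi_comp (e c) (m c)


structure QData {K : Type u} [Category.{v} K] {𝒞 : Type v} [SmallCategory 𝒞] (X : 𝒞 ⥤ K)
    (ι : 𝒞 → Type v) (Z : ∀ c, ι c → K) (p : ∀ c i, X.obj c ⟶ Z c i) where
  idx : ∀ c, ι c
  fm : ∀ ⦃c c'⦄ (φ : c ⟶ c'), Z c (idx c) ⟶ Z c' (idx c')
  fm_id : ∀ c, fm (𝟙 c) = 𝟙 _
  fm_comp : ∀ ⦃c c' c''⦄ (φ : c ⟶ c') (ψ : c' ⟶ c''), fm (φ ≫ ψ) = fm φ ≫ fm ψ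
  nat : ∀ ⦃c c'⦄ (φ : c ⟶ c'), X.map φ ≫ p c' (idx c') = p c (idx c) ≫ fm φ

def QData.functor {K : Type u} [Category.{v} K] {𝒞 : Type v} [SmallCategory 𝒞] {X : 𝒞 ⥤ K}
    {ι : 𝒞 → Type v} {Z : ∀ c, ι c → K} {p : ∀ c i, X.obj c ⟶ Z c i}
    (d : QData X ι Z p) : 𝒞 ⥤ K where
  obj c := Z c (d.idx c)
  map φ := d.fm φ
  map_id c := d.fm_id c
  map_comp f g := d.fm_comp f g

def QData.natTrans {K : Type u} [Category.{v} K] {𝒞 : Type v} [SmallCategory 𝒞] {X : 𝒞 ⥤ K}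
    {ι : 𝒞 → Type v} {Z : ∀ c, ι c → K} {p : ∀ c i, X.obj c ⟶ Z c i}
    (d : QData X ι Z p) : X ⟶ d.functor where
  app c := p c (d.idx c)
  naturality _ _ φ := d.nat φ

theorem wcwpFunctor {K : Type u} [Category.{v} K] {𝒞 : Type v} [SmallCategory 𝒞]
    (facts : HasStrongEpiMonoFacts K) (wcwpK : WeaklyCoWellPowered K) :
    WeaklyCoWellPowered (𝒞 ⥤ K) := by
  intro X
  choose ι Z p h using fun c => wcwpK (X.obj c)
  refine ⟨{d : QData X ι Z p // StrongEpi d.natTrans}, fun d => d.1.functor,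
    fun d => d.1.natTrans, fun d => d.2, ?_⟩
  intro Y f hf
  haveI := hf
  have hc : ∀ c, StrongEpi (f.app c) := strongEpi_app facts f
  choose idx ec hec using fun c => (h c).2 (Y.obj c) (f.app c) (hc c)
  have nat : ∀ ⦃c c'⦄ (φ : c ⟶ c'),
      X.map φ ≫ p c' (idx c') = p c (idx c) ≫ (ec c).hom ≫ Y.map φ ≫ (ec c').inv := by
    intro c c' φ
    rw [← Category.assoc (p c (idx c)), hec c, ← Category.assoc (f.app c), ← f.naturality φ,
      ← hec c']
    simp
  let d : QData X ι Z p :=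
    { idx := idx
      fm := fun c c' φ => (ec c).hom ≫ Y.map φ ≫ (ec c').inv
      fm_id := fun c => by simp
      fm_comp := fun c c' c'' φ ψ => by simp
      nat := nat }
  let isoY : d.functor ≅ Y :=
    NatIso.ofComponents (fun c => ec c) (by
      intro c c' φ
      show ((ec c).hom ≫ Y.map φ ≫ (ec c').inv) ≫ (ec c').hom = (ec c).hom ≫ Y.map φ
      simp)
  have hpf : d.natTrans ≫ isoY.hom = f := by
    ext c
    simp only [NatTrans.comp_app, QData.natTrans, NatIso.ofComponents, Iso.trans_hom]
    exact hec c
  have hstrong : StrongEpi d.natTrans := by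
    have : d.natTrans = f ≫ isoY.inv := by
      rw [← hpf]; simp
    rw [this]
    haveI : StrongEpi isoY.inv := strongEpi_of_isIso _
    exact strongEpi_comp f isoY.inv
  exact ⟨⟨d, hstrong⟩, isoY, hpf⟩


section FunctorCatAux
variable {𝒞 : Type v} [SmallCategory 𝒞] {K : Type u} [Category.{v} K] [HasColimitsOfSize.{v,v} K]

/-- The copower-by-representable functor: left adjoint value of evaluation at `c` on `A`. -/
noncomputable def corep (c : 𝒞) (A : K) : 𝒞 ⥤ K where
  obj c' := ∐ fun _ : c ⟶ c' => A
  map {c' c''} φ := Sigma.desc fun g => Sigma.ι (fun _ : c ⟶ c'' => A) (g ≫ φ)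
  map_id c' := by ext g; simp
  map_comp φ ψ := by ext g; simp

noncomputable def corepEquiv (c : 𝒞) (A : K) (G : 𝒞 ⥤ K) :
    (corep c A ⟶ G) ≃ (A ⟶ G.obj c) where
  toFun η := Sigma.ι (fun _ : c ⟶ c => A) (𝟙 c) ≫ η.app c
  invFun u :=
    { app := fun c' => Sigma.desc fun g => u ≫ G.map g
      naturality := fun c' c'' φ => by
        dsimp [corep]
        ext g
        simp }
  left_inv η := by
    apply NatTrans.ext
    funext c'
    apply colimit.hom_ext
    intro ⟨g⟩
    have hnat := η.naturality g
    dsimp [corep] at hnat ⊢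
    simp only [colimit.ι_desc, Cofan.mk_pt, Cofan.mk_ι_app, Category.assoc]
    rw [← hnat]
    have : Sigma.ι (fun _ : c ⟶ c => A) (𝟙 c) ≫ (corep c A).map g
        = Sigma.ι (fun _ : c ⟶ c' => A) g := by
      dsimp [corep]; simp
    rw [← Category.assoc]
    dsimp [corep] at this
    rw [this]
  right_inv u := by simp

lemma corepEquiv_comp (c : 𝒞) (A : K) {G H : 𝒞 ⥤ K} (η : corep c A ⟶ G) (θ : G ⟶ H) :
    corepEquiv c A H (η ≫ θ) = corepEquiv c A G η ≫ θ.app c := by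
  change _ ≫ (η ≫ θ).app c = (_ ≫ η.app c) ≫ θ.app c
  exact (Category.assoc _ _ _).symm


section evalIso
variable (c : 𝒞) {I : Type v} (G : I → (𝒞 ⥤ K))

noncomputable def evCofan : Cocone (Discrete.functor (fun i => (G i).obj c)) :=
  Cofan.mk ((∐ G).obj c) (fun i => (Sigma.ι G i).app c)

noncomputable def evCofanIsColimit : IsColimit (evCofan c G) := by
  let big := isColimitOfPreserves ((evaluation 𝒞 K).obj c)
    (colimit.isColimit (Discrete.functor G))
  let α : Discrete.functor (fun i => (G i).obj c)
      ≅ Discrete.functor G ⋙ (evaluation 𝒞 K).obj c :=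
    Discrete.natIso (fun i => Iso.refl _)
  refine IsColimit.ofIsoColimit ((IsColimit.precomposeHomEquiv α _).symm big) ?_
  refine Cocones.ext (Iso.refl _) ?_
  intro ⟨i⟩
  dsimp [α, evCofan]
  simp

lemma evalIso_fact (i : I) :
    (Sigma.ι G i).app c ≫ ((evCofanIsColimit c G).coconePointUniqueUpToIso
      (colimit.isColimit _)).hom = Sigma.ι (fun i => (G i).obj c) i :=
  (evCofanIsColimit c G).comp_coconePointUniqueUpToIso_hom (colimit.isColimit _) ⟨i⟩

noncomputable def evalIso : (∐ G).obj c ≅ ∐ (fun i => (G i).obj c) :=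
  (evCofanIsColimit c G).coconePointUniqueUpToIso (colimit.isColimit _)

lemma evalIso_fact' (i : I) :
    (Sigma.ι G i).app c ≫ (evalIso c G).hom = Sigma.ι (fun i => (G i).obj c) i :=
  evalIso_fact c G i

lemma ev_hom_ext {T : K} (g₁ g₂ : (∐ G).obj c ⟶ T)
    (hyp : ∀ i : I, (Sigma.ι G i).app c ≫ g₁ = (Sigma.ι G i).app c ≫ g₂) : g₁ = g₂ :=
  (evCofanIsColimit c G).hom_ext (fun ⟨i⟩ => hyp i)

end evalIso

section np
variable (κ : Cardinal.{v}) (c : 𝒞) {I : Type v} (G : I → (𝒞 ⥤ K))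

lemma evalIso_diag (J J' : SmallSub κ I) (f : J ⟶ J') :
    ((subDiag κ G).map f).app c ≫ (evalIso c (fun j : J'.1 => G j)).hom
      = (evalIso c (fun j : J.1 => G j)).hom ≫ (subDiag κ (fun i => (G i).obj c)).map f := by
  apply ev_hom_ext
  intro j
  erw [← Category.assoc, ← NatTrans.comp_app]
  dsimp only [subDiag]
  rw [colimit.ι_desc]
  dsimp
  rw [evalIso_fact', ← Category.assoc, evalIso_fact', colimit.ι_desc]
  rfl

lemma evalIso_cocone (J : SmallSub κ I) :
    ((subCocone κ G).ι.app J).app c ≫ (evalIso c G).hom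
      = (evalIso c (fun j : J.1 => G j)).hom ≫ (subCocone κ (fun i => (G i).obj c)).ι.app J := by
  apply ev_hom_ext
  intro j
  erw [← Category.assoc, ← NatTrans.comp_app]
  dsimp only [subCocone]
  rw [colimit.ι_desc]
  dsimp
  rw [evalIso_fact', ← Category.assoc, evalIso_fact', colimit.ι_desc]
  rfl

theorem corep_nearlyPresentable (A : K) (hA : NearlyPresentable κ A) :
    NearlyPresentable κ (corep c A) := by
  intro I G
  obtain ⟨hc⟩ := hA (fun i => (G i).obj c)
  let eJ : ∀ J : SmallSub κ I,
      (corep c A ⟶ ∐ (fun j : J.1 => G j)) ≃ (A ⟶ ∐ (fun j : J.1 => (G j).obj c)) :=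
    fun J =>
      { toFun := fun η => corepEquiv c A _ η ≫ (evalIso c (fun j : J.1 => G j)).hom
        invFun := fun u => (corepEquiv c A _).symm (u ≫ (evalIso c (fun j : J.1 => G j)).inv)
        left_inv := fun η => by simp
        right_inv := fun u => by simp }
  have keyJ : ∀ (J J' : SmallSub κ I) (f : J ⟶ J') (η : corep c A ⟶ ∐ (fun j : J.1 => G j)),
      eJ J' (η ≫ (subDiag κ G).map f)
        = eJ J η ≫ (subDiag κ (fun i => (G i).obj c)).map f := by
    intro J J' f η
    dsimp only [eJ, Equiv.coe_fn_mk]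
    erw [corepEquiv_comp, Category.assoc, evalIso_diag, ← Category.assoc]
    rfl
  let α : subDiag κ G ⋙ coyoneda.obj (op (corep c A))
      ≅ subDiag κ (fun i => (G i).obj c) ⋙ coyoneda.obj (op A) :=
    NatIso.ofComponents (fun J => Equiv.toIso (eJ J)) (by
      intro J J' f
      ext η
      exact keyJ J J' f η)
  let eT : ((coyoneda.obj (op (corep c A))).mapCocone (subCocone κ G)).pt
      ≅ ((coyoneda.obj (op A)).mapCocone (subCocone κ (fun i => (G i).obj c))).pt :=
    Equiv.toIso
      { toFun := fun η => corepEquiv c A (∐ G) η ≫ (evalIso c G).hom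
        invFun := fun u => (corepEquiv c A (∐ G)).symm (u ≫ (evalIso c G).inv)
        left_inv := fun (η : corep c A ⟶ ∐ G) => by
          exact (congrArg (corepEquiv c A (∐ G)).symm ((Category.assoc _ _ _).trans
            ((congrArg (corepEquiv c A (∐ G) η ≫ ·) (evalIso c G).hom_inv_id).trans
              (Category.comp_id _)))).trans ((corepEquiv c A (∐ G)).symm_apply_apply η)
        right_inv := fun (u : A ⟶ ∐ fun i => (G i).obj c) => by
          exact (congrArg (· ≫ (evalIso c G).hom) ((corepEquiv c A (∐ G)).apply_symm_apply _)).trans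
            ((Category.assoc _ _ _).trans ((congrArg (u ≫ ·) (evalIso c G).inv_hom_id).trans
              (Category.comp_id u))) }
  refine ⟨(IsColimit.equivOfNatIsoOfIso α ((coyoneda.obj (op (corep c A))).mapCocone (subCocone κ G))
    ((coyoneda.obj (op A)).mapCocone (subCocone κ (fun i => (G i).obj c))) (Cocones.ext eT ?_)).symm hc⟩
  intro J
  ext η₂
  obtain ⟨η, rfl⟩ := (eJ J).surjective η₂
  change corepEquiv c A (∐ G) ((eJ J).symm (eJ J η) ≫ (subCocone κ G).ι.app J) ≫ (evalIso c G).hom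
    = eJ J η ≫ (subCocone κ (fun i => (G i).obj c)).ι.app J
  rw [Equiv.symm_apply_apply]
  erw [corepEquiv_comp, Category.assoc, evalIso_cocone]
  exact (Category.assoc _ _ _).symm
end np


section gen
variable (c : 𝒞) (A : K)

lemma corepEquiv_symm_comp {G H : 𝒞 ⥤ K} (u : A ⟶ G.obj c) (θ : G ⟶ H) :
    corepEquiv c A H ((corepEquiv c A G).symm u ≫ θ) = u ≫ θ.app c := by
  rw [corepEquiv_comp, Equiv.apply_symm_apply]

theorem genStrong (S : Set K) (hS : IsStrongGenerator S) :
    IsStrongGenerator (Set.range (fun x : 𝒞 × S => corep (K := K) x.1 x.2.1)) := by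
  haveI := hS.small
  haveI := hS.faithful
  haveI := hS.reflectsIsos
  constructor
  · exact small_range _
  · refine ⟨fun {G H} {φ ψ} hEq => ?_⟩
    apply NatTrans.ext
    funext c
    apply (restrictedYoneda S).map_injective
    apply NatTrans.ext
    funext W
    ext u
    set A := W.unop.obj with hA
    have hmem : corep c A ∈ Set.range (fun x : 𝒞 × S => corep (K := K) x.1 x.2.1) :=
      ⟨(c, ⟨A, W.unop.property⟩), rfl⟩
    have h2 := ConcreteCategory.congr_hom (congrArg
      (fun (t : NatTrans _ _) => t.app (op (⟨corep c A, hmem⟩ : ObjectProperty.FullSubcategory _))) hEq)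
      ((corepEquiv c A G).symm u)
    have h3 : (corepEquiv c A G).symm u ≫ φ = (corepEquiv c A G).symm u ≫ ψ := h2
    show u ≫ φ.app c = u ≫ ψ.app c
    rw [← corepEquiv_symm_comp c A u φ, ← corepEquiv_symm_comp c A u ψ, h3]
  · refine ⟨fun {G H} φ hiso => ?_⟩
    haveI : ∀ c : 𝒞, IsIso (φ.app c) := by
      intro c
      haveI : ∀ (W : (ObjectProperty.FullSubcategory (· ∈ S))ᵒᵖ),
          IsIso (((restrictedYoneda S).map (φ.app c)).app W) := by
        intro W
        set A := W.unop.obj with hA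
        have hmem : corep c A ∈ Set.range (fun x : 𝒞 × S => corep (K := K) x.1 x.2.1) :=
          ⟨(c, ⟨A, W.unop.property⟩), rfl⟩
        have hb : Function.Bijective (fun η : corep c A ⟶ G => η ≫ φ) := by
          have h4 : IsIso ((restrictedYoneda
              (Set.range (fun x : 𝒞 × S => corep (K := K) x.1 x.2.1))).map φ) := hiso
          haveI h5 := NatIso.isIso_app_of_isIso ((restrictedYoneda
              (Set.range (fun x : 𝒞 × S => corep (K := K) x.1 x.2.1))).map φ)
              (op (⟨corep c A, hmem⟩ : ObjectProperty.FullSubcategory _))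
          exact (isIso_iff_bijective _).1 h5
        have hb2 : Function.Bijective (fun u : A ⟶ G.obj c => u ≫ φ.app c) := by
          have heqf : (fun u : A ⟶ G.obj c => u ≫ φ.app c)
              = (corepEquiv c A H) ∘ (fun η : corep c A ⟶ G => η ≫ φ)
                ∘ ⇑(corepEquiv c A G).symm := by
            funext u
            exact (corepEquiv_symm_comp c A u φ).symm
          rw [heqf]
          exact (corepEquiv c A H).bijective.comp (hb.comp (corepEquiv c A G).symm.bijective)
        exact (isIso_iff_bijective _).2 hb2
      haveI : IsIso ((restrictedYoneda S).map (φ.app c)) := NatIso.isIso_of_isIso_app _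
      exact isIso_of_reflects_iso (φ.app c) (restrictedYoneda S)
    exact NatIso.isIso_of_isIso_app φ

end gen


end FunctorCatAux

end Aux15

end NLP

/-- If `K` is nearly locally `κ`-presentable and `𝒞` is a small
category, then the functor category `K^𝒞` is nearly locally `κ`-presentable. -/
theorem NLP.stmt15 {K : Type u} [Category.{v} K] (κ : Cardinal.{v})
    (h : IsNearlyLocallyPresentable κ K)
    (𝒞 : Type v) [SmallCategory 𝒞] :
    IsNearlyLocallyPresentable κ (𝒞 ⥤ K) := by
  haveI := h.cocomplete
  obtain ⟨S, hS, hnp⟩ := h.exists_gen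
  refine ⟨h.isRegular, inferInstance, ?_, ?_⟩
  · exact wcwpFunctor (semf h.wcwp) h.wcwp
  · refine ⟨Set.range (fun x : 𝒞 × S => corep x.1 x.2.1), genStrong S hS, ?_⟩
    rintro F ⟨⟨c, A⟩, rfl⟩
    exact corep_nearlyPresentable κ c A.1 (hnp A.1 A.2)
end

section
/- Every nearly locally λ-presentable category has monomorphisms stable under special λ-directed colimits; that is, for every family (K_i)_{i∈I} of objects, every morphism f : ∐_{i∈I} K_i → K whose composition with each subcoproduct injection ∐_{j∈J} K_j → ∐_{i∈I} K_i (J ⊆ I of cardinality less than λ) is a monomorphism is itself a monomorphism. -/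
universe w v u u₁ u₂

open CategoryTheory CategoryTheory.Limits Opposite

/-- Every nearly locally `κ`-presentable category has monomorphisms
stable under special `κ`-directed colimits. -/
theorem NLP.stmt18 {C : Type u} [Category.{v} C] (κ : Cardinal.{v})
    (h : IsNearlyLocallyPresentable κ C) :
    haveI := h.cocomplete
    MonosStableUnderSpecial (C := C) κ := by
  haveI := h.cocomplete
  intro I K X f hf
  obtain ⟨S, hS, hpres⟩ := h.exists_gen
  constructor
  intro Y u v huv
  haveI := hS.faithful
  apply (restrictedYoneda S).map_injective
  ext A g
  show g ≫ u = g ≫ v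
  obtain ⟨hc⟩ := hpres A.unop.obj A.unop.property K
  obtain ⟨J, p', hp⟩ := Types.jointly_surjective _ hc (g ≫ u)
  obtain ⟨J', q', hq⟩ := Types.jointly_surjective _ hc (g ≫ v)
  have hJ'' : Cardinal.mk (↑(J.1 ∪ J'.1)) < κ :=
    (Cardinal.mk_union_le _ _).trans_lt
      (Cardinal.add_lt_of_lt h.isRegular.aleph0_le J.2 J'.2)
  set J'' : SmallSub κ I := ⟨J.1 ∪ J'.1, hJ''⟩ with hJdef
  have fJ : J ⟶ J'' := homOfLE (by exact Set.subset_union_left)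
  have fJ' : J' ⟶ J'' := homOfLE (by exact Set.subset_union_right)
  have hp' : g ≫ u = p' ≫ subInj κ K J := hp.symm
  have hq' : g ≫ v = q' ≫ subInj κ K J' := hq.symm
  have wJ : (subDiag κ K).map fJ ≫ subInj κ K J'' = subInj κ K J :=
    (subCocone κ K).w fJ
  have wJ' : (subDiag κ K).map fJ' ≫ subInj κ K J'' = subInj κ K J' :=
    (subCocone κ K).w fJ'
  haveI := hf J''
  have key : (p' ≫ (subDiag κ K).map fJ) ≫ (subInj κ K J'' ≫ f)
      = (q' ≫ (subDiag κ K).map fJ') ≫ (subInj κ K J'' ≫ f) := by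
    have e1 : (p' ≫ (subDiag κ K).map fJ) ≫ subInj κ K J'' = g ≫ u := by
      refine (Category.assoc _ _ _).trans ?_; rw [wJ]; exact hp'.symm
    have e2 : (q' ≫ (subDiag κ K).map fJ') ≫ subInj κ K J'' = g ≫ v := by
      refine (Category.assoc _ _ _).trans ?_; rw [wJ']; exact hq'.symm
    exact (Category.assoc _ _ _).symm.trans ((congrArg (· ≫ f) e1).trans ((Category.assoc _ _ _).trans ((congrArg (g ≫ ·) huv).trans ((Category.assoc _ _ _).symm.trans ((congrArg (· ≫ f) e2.symm).trans (Category.assoc _ _ _))))))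
  have := cancel_mono (subInj κ K J'' ≫ f) |>.mp key
  calc g ≫ u = p' ≫ subInj κ K J := hp'
    _ = p' ≫ ((subDiag κ K).map fJ ≫ subInj κ K J'') := by rw [wJ]
    _ = (p' ≫ (subDiag κ K).map fJ) ≫ subInj κ K J'' := (Category.assoc _ _ _).symm
    _ = (q' ≫ (subDiag κ K).map fJ') ≫ subInj κ K J'' := by rw [this]
    _ = q' ≫ ((subDiag κ K).map fJ' ≫ subInj κ K J'') := Category.assoc _ _ _
    _ = q' ≫ subInj κ K J' := by rw [wJ']
    _ = g ≫ v := hq'.symm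
end
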